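/- Let M be a bounded metric space. Then the MST dimension of M equals the upper box dimension of M; that is, inf{ α > 0 : there exists C > 0 such that every minimal spanning tree T over any finite family of points of M satisfies E_α(T) ≤ C } equals limsup_{ε→0} log N(ε) / log(1/ε), where N(ε) is the maximal cardinality of a finite subset of M whose points have pairwise distances ≥ 2ε (the maximal number of pairwise disjoint balls of radius ε in M). -/

import Mathlib

/-- The `α`-energy of a graph `T` on vertex set `Fin n`, with vertex `i` placed at
`v i` in the metric space `X`: the sum over the edges `{i,j}` of `T` of
`dist (v i) (v j) ^ α`. -/
noncomputable def energy {X : Type*} [MetricSpace X] {n : ℕ} (v : Fin n → X)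
    (T : SimpleGraph (Fin n)) (α : ℝ) : ℝ :=
  ∑ e ∈ T.edgeSet.toFinite.toFinset,
    Sym2.lift ⟨fun i j => dist (v i) (v j) ^ α, fun i j => by simp only [dist_comm]⟩ e

/-- `T` is a minimal spanning tree over the points `v 0, …, v (n-1)`: it is a tree on
the vertex set `Fin n` minimizing the total edge length `E₁` among all such trees. -/
def IsMST {X : Type*} [MetricSpace X] {n : ℕ} (v : Fin n → X)
    (T : SimpleGraph (Fin n)) : Prop :=
  T.IsTree ∧ ∀ T' : SimpleGraph (Fin n), T'.IsTree → energy v T 1 ≤ energy v T' 1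

open scoped ENNReal Classical

/-- The MST dimension of a metric space `M`, as a value in `[0, ∞]`: the infimum of the
set of exponents `α > 0` for which there is a constant `C` bounding the `α`-energy of
every minimal spanning tree over any finite family of points of `M`. -/
noncomputable def dimMST (M : Type*) [MetricSpace M] : ℝ≥0∞ :=
  sInf {x : ℝ≥0∞ | ∃ α : ℝ, 0 < α ∧ x = ENNReal.ofReal α ∧ ∃ C : ℝ,
    ∀ n : ℕ, ∀ v : Fin n → M, ∀ T : SimpleGraph (Fin n), IsMST v T → energy v T α ≤ C}

/-- The packing number `N(ε)` of a metric space `M`, as a value in `[0, ∞]`: the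
supremum of the cardinalities of finite subsets of `M` whose points are pairwise at
distance `≥ 2ε`, i.e. the maximal number of pairwise disjoint balls of radius `ε`. -/
noncomputable def packingNumber (M : Type*) [MetricSpace M] (ε : ℝ) : ℝ≥0∞ :=
  ⨆ (S : Finset M) (_ : ∀ x ∈ S, ∀ y ∈ S, x ≠ y → 2 * ε ≤ dist x y), (S.card : ℝ≥0∞)

/-- The upper box dimension of a metric space `M`, as a value in `[0, ∞]`:
`limsup_{ε → 0⁺} log N(ε) / log (1/ε)` where `N(ε)` is the packing number; the value is
`∞` at scales where the packing number is infinite. -/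
noncomputable def dimBox (M : Type*) [MetricSpace M] : ℝ≥0∞ :=
  Filter.limsup (fun ε : ℝ =>
      if packingNumber M ε = ⊤ then (⊤ : ℝ≥0∞)
      else ENNReal.ofReal (Real.log (packingNumber M ε).toReal / Real.log (1 / ε)))
    (nhdsWithin (0 : ℝ) (Set.Ioi 0))

namespace MSTProof
open SimpleGraph

section Graph
variable {V : Type*}


lemma adj_del {G : SimpleGraph V} {e : Sym2 V} {x z : V} (h : G.Adj x z)
    (hne : s(x,z) ≠ e) : (G \ fromEdgeSet {e}).Adj x z := by
  rw [SimpleGraph.sdiff_adj, fromEdgeSet_adj]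
  exact ⟨h, by simp [hne]⟩

lemma reach_abo {G : SimpleGraph V} {a b x y : V} (p : G.Walk x y) :
    (G \ fromEdgeSet {s(a,b)}).Reachable x a ∨ (G \ fromEdgeSet {s(a,b)}).Reachable x b ∨
      (G \ fromEdgeSet {s(a,b)}).Reachable x y := by
  induction p with
  | nil => exact Or.inr (Or.inr (Reachable.refl _))
  | @cons x z y h q ih =>
    by_cases he : s(x, z) = s(a, b)
    · rw [Sym2.eq_iff] at he
      rcases he with ⟨rfl, rfl⟩ | ⟨rfl, rfl⟩
      · exact Or.inl (Reachable.refl _)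
      · exact Or.inr (Or.inl (Reachable.refl _))
    · have hadj := adj_del h he
      rcases ih with h1 | h1 | h1
      · exact Or.inl (hadj.reachable.trans h1)
      · exact Or.inr (Or.inl (hadj.reachable.trans h1))
      · exact Or.inr (Or.inr (hadj.reachable.trans h1))

lemma reach_or {G : SimpleGraph V} (hG : G.Connected) (a b x : V) :
    (G \ fromEdgeSet {s(a,b)}).Reachable x a ∨ (G \ fromEdgeSet {s(a,b)}).Reachable x b := by
  obtain ⟨p⟩ := hG x a
  rcases reach_abo (a := a) (b := b) p with h | h | h
  · exact Or.inl h
  · exact Or.inr h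
  · exact Or.inl h

lemma not_reach_del {T : SimpleGraph V} (hT : T.IsAcyclic) {a b : V} (hab : T.Adj a b) :
    ¬(T \ fromEdgeSet {s(a,b)}).Reachable a b :=
  ((isBridge_iff).mp ((isAcyclic_iff_forall_adj_isBridge.mp hT) hab))

lemma reach_of_detour {G : SimpleGraph V} {a b : V}
    (hd : (G \ fromEdgeSet {s(a,b)}).Reachable a b) {x y : V} (p : G.Walk x y) :
    (G \ fromEdgeSet {s(a,b)}).Reachable x y := by
  induction p with
  | nil => exact Reachable.refl _
  | @cons x z y h q ih =>
    by_cases he : s(x, z) = s(a, b)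
    · rw [Sym2.eq_iff] at he
      rcases he with ⟨rfl, rfl⟩ | ⟨rfl, rfl⟩
      · exact hd.trans ih
      · exact hd.symm.trans ih
    · exact (adj_del h he).reachable.trans ih

lemma exchange_isTree {T : SimpleGraph V} (hT : T.IsTree) {a b x y : V}
    (hab : T.Adj a b)
    (hx : (T \ fromEdgeSet {s(a,b)}).Reachable x a)
    (hy : (T \ fromEdgeSet {s(a,b)}).Reachable y b) :
    ((T \ fromEdgeSet {s(a,b)}) ⊔ fromEdgeSet {s(x,y)}).IsTree := by
  have hbridge : ¬(T \ fromEdgeSet {s(a,b)}).Reachable a b := not_reach_del hT.IsAcyclic hab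
  have hxy : x ≠ y := by
    rintro rfl
    exact hbridge (hx.symm.trans hy)
  haveI : Nonempty V := hT.isConnected.nonempty
  set G' := (T \ fromEdgeSet {s(a,b)}) ⊔ fromEdgeSet {s(x,y)} with hG'
  have hle : (T \ fromEdgeSet {s(a,b)}) ≤ G' := le_sup_left
  have hadjxy : G'.Adj x y := by
    rw [hG', sup_adj, fromEdgeSet_adj]
    exact Or.inr ⟨rfl, hxy⟩
  have hreach : ∀ u : V, G'.Reachable u x := by
    intro u
    rcases reach_or hT.isConnected a b u with h | h
    · exact (h.mono hle).trans (hx.symm.mono hle)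
    · exact ((h.mono hle).trans (hy.symm.mono hle)).trans hadjxy.symm.reachable
  constructor
  · exact ⟨fun u w => (hreach u).trans (hreach w).symm⟩
  · intro u c hc
    by_cases hmem : s(x, y) ∈ c.edges
    · have hcyc := (adj_and_reachable_delete_edges_iff_exists_cycle (G := G')).mpr ⟨u, c, hc, hmem⟩
      have hle2 : (G' \ fromEdgeSet {s(x,y)}) ≤ (T \ fromEdgeSet {s(a,b)}) := by
        intro v w hvw
        rw [SimpleGraph.sdiff_adj, fromEdgeSet_adj] at hvw
        rcases hvw with ⟨hvw, hne⟩
        rw [hG', sup_adj, fromEdgeSet_adj] at hvw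
        rcases hvw with h | h
        · exact h
        · exact absurd h hne
      exact hbridge (hx.symm.trans (((hcyc.2).mono hle2).trans hy))
    · have hsub : ∀ e ∈ c.edges, e ∈ T.edgeSet := by
        intro e he
        have h1 := c.edges_subset_edgeSet he
        simp only [hG', edgeSet_sup, edgeSet_sdiff, edgeSet_fromEdgeSet, Set.mem_union,
          Set.mem_diff, Set.mem_singleton_iff, Set.mem_setOf_eq] at h1
        rcases h1 with h1 | ⟨h1, -⟩
        · exact h1.1
        · exact absurd (h1 ▸ he) hmem
      exact hT.IsAcyclic (c.transfer T hsub) (hc.transfer hsub)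


end Graph

variable {X : Type*} [MetricSpace X] {n : ℕ}

/-- length of an edge -/
noncomputable def elen (v : Fin n → X) : Sym2 (Fin n) → ℝ :=
  Sym2.lift ⟨fun i j => dist (v i) (v j), fun i j => by simp only [_root_.dist_comm]⟩

@[simp] lemma elen_mk (v : Fin n → X) (i j : Fin n) : elen v s(i,j) = dist (v i) (v j) := rfl

lemma elen_nonneg (v : Fin n → X) (e : Sym2 (Fin n)) : 0 ≤ elen v e := by
  induction e with
  | _ i j => exact dist_nonneg

lemma energy_eq (v : Fin n → X) (T : SimpleGraph (Fin n)) (α : ℝ) :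
    energy v T α = ∑ e ∈ T.edgeSet.toFinite.toFinset, (elen v e) ^ α := by
  unfold energy
  refine Finset.sum_congr rfl fun e _ => ?_
  induction e with
  | _ i j => rfl

lemma edge_finset_exchange {T : SimpleGraph (Fin n)} (hT : T.IsTree) {a b x y : Fin n}
    (hab : T.Adj a b)
    (hx : (T \ fromEdgeSet {s(a,b)}).Reachable x a)
    (hy : (T \ fromEdgeSet {s(a,b)}).Reachable y b) :
    ((T \ fromEdgeSet {s(a,b)}) ⊔ fromEdgeSet {s(x,y)}).edgeSet.toFinite.toFinset
      = insert s(x,y) ((T.edgeSet.toFinite.toFinset).erase s(a,b)) := by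
  have hbridge : ¬(T \ fromEdgeSet {s(a,b)}).Reachable a b := not_reach_del hT.IsAcyclic hab
  have hxy : x ≠ y := by rintro rfl; exact hbridge (hx.symm.trans hy)
  ext e
  simp only [Set.Finite.mem_toFinset, Finset.mem_insert, Finset.mem_erase,
    edgeSet_sup, edgeSet_sdiff, edgeSet_fromEdgeSet, Set.mem_union, Set.mem_diff,
    Set.mem_singleton_iff, Set.mem_setOf_eq]
  constructor
  · rintro (⟨h1, h2⟩ | ⟨h1, -⟩)
    · exact Or.inr ⟨fun heq => h2 ⟨heq, T.not_isDiag_of_mem_edgeSet h1⟩, h1⟩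
    · exact Or.inl h1
  · rintro (rfl | ⟨h1, h2⟩)
    · exact Or.inr ⟨rfl, by simp [hxy]⟩
    · exact Or.inl ⟨h2, fun h => h1 h.1⟩

lemma sxy_not_mem {T : SimpleGraph (Fin n)} (hT : T.IsTree) {a b x y : Fin n}
    (hab : T.Adj a b)
    (hx : (T \ fromEdgeSet {s(a,b)}).Reachable x a)
    (hy : (T \ fromEdgeSet {s(a,b)}).Reachable y b) :
    s(x,y) ∉ (T.edgeSet.toFinite.toFinset).erase s(a,b) := by
  have hbridge : ¬(T \ fromEdgeSet {s(a,b)}).Reachable a b := not_reach_del hT.IsAcyclic hab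
  intro hmem
  rw [Finset.mem_erase, Set.Finite.mem_toFinset] at hmem
  exact hbridge (hx.symm.trans ((adj_del (hmem.2) hmem.1).reachable.trans hy))

lemma energy_exchange (v : Fin n → X) {T : SimpleGraph (Fin n)} (hT : T.IsTree)
    {a b x y : Fin n} (hab : T.Adj a b) (α : ℝ)
    (hx : (T \ fromEdgeSet {s(a,b)}).Reachable x a)
    (hy : (T \ fromEdgeSet {s(a,b)}).Reachable y b) :
    energy v ((T \ fromEdgeSet {s(a,b)}) ⊔ fromEdgeSet {s(x,y)}) α
      = energy v T α - dist (v a) (v b) ^ α + dist (v x) (v y) ^ α := by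
  rw [energy_eq, energy_eq, edge_finset_exchange hT hab hx hy,
    Finset.sum_insert (sxy_not_mem hT hab hx hy),
    Finset.sum_erase_eq_sub (by rw [Set.Finite.mem_toFinset]; exact hab)]
  simp only [elen_mk]
  ring

/-- The key cut property of minimal spanning trees. -/
lemma cut_property {v : Fin n → X} {T : SimpleGraph (Fin n)} (hMST : IsMST v T)
    {a b x y : Fin n} (hab : T.Adj a b)
    (hx : (T \ fromEdgeSet {s(a,b)}).Reachable x a)
    (hy : (T \ fromEdgeSet {s(a,b)}).Reachable y b) :
    dist (v a) (v b) ≤ dist (v x) (v y) := by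
  have h := hMST.2 _ (exchange_isTree hMST.1 hab hx hy)
  rw [energy_exchange v hMST.1 hab 1 hx hy] at h
  simp only [Real.rpow_one] at h
  linarith

section Sep
variable {V : Type*}

lemma walk_avoid_of_reach [DecidableEq V] {G : SimpleGraph V} {e : Sym2 V} {x y : V}
    (h : (G \ fromEdgeSet {e}).Reachable x y) : ∃ p : G.Walk x y, p.IsPath ∧ e ∉ p.edges := by
  obtain ⟨w⟩ := h
  let w' : G.Walk x y := w.map (Hom.ofLE (sdiff_le : G \ fromEdgeSet {e} ≤ G))
  have hne : e ∉ w'.edges := by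
    intro hmem
    simp only [w', Walk.edges_map, List.mem_map, Hom.ofLE_apply,
      Sym2.map_id', id] at hmem
    obtain ⟨e', he', rfl⟩ := hmem
    have h1 := w.edges_subset_edgeSet he'
    rw [edgeSet_sdiff, edgeSet_fromEdgeSet] at h1
    exact h1.2 ⟨rfl, not_isDiag_of_mem_edgeSet _ h1.1⟩
  exact ⟨w'.toPath, (w'.toPath).2, fun hm => hne (Walk.edges_toPath_subset w' hm)⟩

lemma reach_del_of_walk_avoid {G : SimpleGraph V} {e : Sym2 V} {x y : V}
    (p : G.Walk x y) (h : e ∉ p.edges) : (G \ fromEdgeSet {e}).Reachable x y := by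
  refine ⟨p.transfer _ fun e' he' => ?_⟩
  rw [edgeSet_sdiff, edgeSet_fromEdgeSet]
  exact ⟨p.edges_subset_edgeSet he', fun hc => h (hc.1 ▸ he')⟩

lemma first_edge_unique {G : SimpleGraph V} {a w : V} (p : G.Walk a w) (hp : p.IsPath)
    {x y : V} (hx : s(a,x) ∈ p.edges) (hy : s(a,y) ∈ p.edges) : x = y := by
  induction p with
  | nil => simp at hx
  | @cons a z w h q ih =>
    rw [Walk.cons_isPath_iff] at hp
    have key : ∀ t : V, s(a,t) ∈ (Walk.cons h q).edges → t = z := by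
      intro t ht
      rw [Walk.edges_cons, List.mem_cons] at ht
      rcases ht with ht | ht
      · rw [Sym2.eq_iff] at ht
        rcases ht with ⟨-, rfl⟩ | ⟨rfl, rfl⟩
        · rfl
        · exact absurd rfl h.ne
      · exact absurd (Walk.fst_mem_support_of_mem_edges q ht) hp.2
    rw [key x hx, key y hy]

end Sep

section Child
variable {V : Type*}

lemma child_exists {T : SimpleGraph V} (hT : T.IsTree) {e : Sym2 V} (he : e ∈ T.edgeSet)
    (r : V) : ∃ p : V × V, e = s(p.1, p.2) ∧ T.Adj p.1 p.2 ∧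
      ¬(T \ fromEdgeSet {e}).Reachable p.1 r ∧ (T \ fromEdgeSet {e}).Reachable p.2 r := by
  induction e with
  | _ a b =>
    have hadj : T.Adj a b := he
    have hbridge := not_reach_del hT.IsAcyclic hadj
    rcases reach_or hT.isConnected a b r with h | h
    · refine ⟨(b, a), Sym2.eq_swap.symm, hadj.symm, fun hbr => ?_, h.symm⟩
      exact hbridge (hbr.trans h).symm
    · exact ⟨(a, b), rfl, hadj, fun har => hbridge (har.trans h), h.symm⟩

noncomputable def childPair {T : SimpleGraph V} (hT : T.IsTree) (r : V) {e : Sym2 V}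
    (he : e ∈ T.edgeSet) : V × V := (child_exists hT he r).choose

lemma childPair_spec {T : SimpleGraph V} (hT : T.IsTree) (r : V) {e : Sym2 V}
    (he : e ∈ T.edgeSet) :
    e = s((childPair hT r he).1, (childPair hT r he).2) ∧
      T.Adj (childPair hT r he).1 (childPair hT r he).2 ∧
      ¬(T \ fromEdgeSet {e}).Reachable (childPair hT r he).1 r ∧
      (T \ fromEdgeSet {e}).Reachable (childPair hT r he).2 r :=
  (child_exists hT he r).choose_spec

end Child

section SepMain
variable {X : Type*} [MetricSpace X] {n : ℕ}

lemma sep_aux {v : Fin n → X} {T : SimpleGraph (Fin n)} (hMST : IsMST v T)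
    (r : Fin n) {a b c d : Fin n}
    (hab : T.Adj a b) (hcd : T.Adj c d) (hef : s(a,b) ≠ s(c,d))
    (hA : ¬(T \ fromEdgeSet {s(a,b)}).Reachable a r)
    (hC : ¬(T \ fromEdgeSet {s(c,d)}).Reachable c r) :
    min (dist (v a) (v b)) (dist (v c) (v d)) ≤ dist (v a) (v c) := by
  have hT := hMST.1
  by_cases h1 : (T \ fromEdgeSet {s(a,b)}).Reachable c b
  · exact le_trans (min_le_left _ _) (cut_property hMST hab (Reachable.refl _) h1)
  by_cases h2 : (T \ fromEdgeSet {s(c,d)}).Reachable a d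
  · refine le_trans (min_le_right _ _) ?_
    have := cut_property hMST hcd (Reachable.refl _) h2
    rwa [_root_.dist_comm (v c) (v a)] at this
  exfalso
  have hca : (T \ fromEdgeSet {s(a,b)}).Reachable c a :=
    (reach_or hT.isConnected a b c).resolve_right h1
  have hac : (T \ fromEdgeSet {s(c,d)}).Reachable a c :=
    (reach_or hT.isConnected c d a).resolve_right h2
  have har : ¬(T \ fromEdgeSet {s(c,d)}).Reachable a r := fun h => hC (hac.symm.trans h)
  obtain ⟨R0⟩ := hT.isConnected a r
  obtain ⟨R, hR⟩ : ∃ p : T.Walk a r, p.IsPath := ⟨R0.toPath, (R0.toPath).2⟩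
  have heR : s(a,b) ∈ R.edges := by
    by_contra hmem; exact hA (reach_del_of_walk_avoid R hmem)
  have hfR : s(c,d) ∈ R.edges := by
    by_contra hmem; exact har (reach_del_of_walk_avoid R hmem)
  by_cases hacq : a = c
  · subst hacq
    exact hef (by rw [first_edge_unique R hR heR hfR])
  obtain ⟨P1, hP1, hP1e⟩ := walk_avoid_of_reach hca.symm
  obtain ⟨P2, hP2, hP2f⟩ := walk_avoid_of_reach hac
  have hP12 : P1 = P2 := (hT.existsUnique_path a c).unique hP1 hP2
  have hcR : c ∈ R.support := Walk.fst_mem_support_of_mem_edges R hfR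
  have hQ : (R.takeUntil c hcR).IsPath := hR.takeUntil hcR
  have hQP : R.takeUntil c hcR = P1 := (hT.existsUnique_path a c).unique hQ hP1
  have hspec := R.take_spec hcR
  have heQ : s(a,b) ∈ (R.takeUntil c hcR).edges := by
    rw [← hspec, Walk.edges_append, List.mem_append] at heR
    rcases heR with h | h
    · exact h
    exfalso
    have haD : a ∈ (R.dropUntil c hcR).support := Walk.fst_mem_support_of_mem_edges _ h
    have hnodup := hR.support_nodup
    rw [← hspec, Walk.support_append] at hnodup
    rw [Walk.support_eq_cons, List.mem_cons] at haD
    rcases haD with h' | h'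
    · exact hacq h'
    · exact (List.disjoint_of_nodup_append hnodup)
        ((R.takeUntil c hcR).start_mem_support) h'
  exact hP1e (hQP ▸ heQ)

lemma sep {v : Fin n → X} {T : SimpleGraph (Fin n)} (hMST : IsMST v T)
    (r : Fin n) {e f : Sym2 (Fin n)} (he : e ∈ T.edgeSet) (hf : f ∈ T.edgeSet) (hef : e ≠ f) :
    min (elen v e) (elen v f)
      ≤ dist (v (childPair hMST.1 r he).1) (v (childPair hMST.1 r hf).1) := by
  obtain ⟨hee, habe, hAe, -⟩ := childPair_spec hMST.1 r he
  obtain ⟨hfe, habf, hAf, -⟩ := childPair_spec hMST.1 r hf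
  have h1 : elen v e = dist (v (childPair hMST.1 r he).1) (v (childPair hMST.1 r he).2) := by
    conv_lhs => rw [hee]
    exact elen_mk v _ _
  have h2 : elen v f = dist (v (childPair hMST.1 r hf).1) (v (childPair hMST.1 r hf).2) := by
    conv_lhs => rw [hfe]
    exact elen_mk v _ _
  rw [h1, h2]
  refine sep_aux hMST r habe habf ?_ (by rw [← hee]; exact hAe) (by rw [← hfe]; exact hAf)
  rw [← hee, ← hfe]; exact hef

end SepMain

section Count
variable {M : Type*} [MetricSpace M] {n : ℕ}

lemma packing_antitone {ε₁ ε₂ : ℝ} (h : ε₁ ≤ ε₂) :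
    packingNumber M ε₂ ≤ packingNumber M ε₁ := by
  refine iSup₂_le fun S hS => ?_
  exact le_iSup₂ (f := fun (S : Finset M) (_ : ∀ x ∈ S, ∀ y ∈ S, x ≠ y → 2 * ε₁ ≤ dist x y)
    => (S.card : ℝ≥0∞)) S (fun x hx y hy hxy => le_trans (by linarith) (hS x hx y hy hxy))

lemma count_le_packing {v : Fin n → M} {T : SimpleGraph (Fin n)}
    (hMST : IsMST v T) {r₀ : ℝ} (hr : 0 < r₀) :
    (((T.edgeSet.toFinite.toFinset).filter (fun e => r₀ ≤ elen v e)).card : ℝ≥0∞)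
      ≤ packingNumber M (r₀ / 2) := by
  classical
  haveI : Nonempty (Fin n) := hMST.1.isConnected.nonempty
  set rt : Fin n := Classical.arbitrary _ with hrt
  set L := (T.edgeSet.toFinite.toFinset).filter (fun e => r₀ ≤ elen v e) with hL
  set g : Sym2 (Fin n) → M := fun e =>
    if he : e ∈ T.edgeSet then v (childPair hMST.1 rt he).1 else v rt with hg
  have hmem : ∀ e ∈ L, e ∈ T.edgeSet ∧ r₀ ≤ elen v e := by
    intro e heL
    rw [hL, Finset.mem_filter, Set.Finite.mem_toFinset] at heL
    exact heL
  have key : ∀ e ∈ L, ∀ f ∈ L, e ≠ f → r₀ ≤ dist (g e) (g f) := by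
    intro e heL f hfL hef
    obtain ⟨he, hre⟩ := hmem e heL
    obtain ⟨hf, hrf⟩ := hmem f hfL
    rw [hg]
    simp only [dif_pos he, dif_pos hf]
    exact le_trans (le_min hre hrf) (sep hMST rt he hf hef)
  have hginj : Set.InjOn g ↑L := by
    intro e heL f hfL hgef
    by_contra hne
    have h1 := key e heL f hfL hne
    rw [hgef, _root_.dist_self] at h1
    linarith
  set S : Finset M := L.image g with hS
  have hcard : S.card = L.card := Finset.card_image_of_injOn hginj
  have hcond : ∀ x ∈ S, ∀ y ∈ S, x ≠ y → 2 * (r₀ / 2) ≤ dist x y := by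
    intro x hx y hy hxy
    rw [hS, Finset.mem_image] at hx hy
    obtain ⟨e, heL, rfl⟩ := hx
    obtain ⟨f, hfL, rfl⟩ := hy
    have hef : e ≠ f := fun h => hxy (by rw [h])
    have := key e heL f hfL hef
    linarith
  calc (L.card : ℝ≥0∞) = (S.card : ℝ≥0∞) := by rw [hcard]
  _ ≤ packingNumber M (r₀ / 2) :=
      le_iSup₂ (f := fun (S : Finset M) (_ : ∀ x ∈ S, ∀ y ∈ S, x ≠ y → 2 * (r₀/2) ≤ dist x y)
        => (S.card : ℝ≥0∞)) S hcond

end Count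

section EnergyBound
variable {M : Type*} [MetricSpace M]

lemma geom_bound {θ : ℝ} (hθ0 : 0 ≤ θ) (hθ1 : θ < 1) (m : ℕ) :
    ∑ i ∈ Finset.range m, θ ^ i ≤ 1 / (1 - θ) := by
  rw [geom_sum_eq (ne_of_lt hθ1)]
  have h1 : (θ ^ m - 1) / (θ - 1) = (1 - θ ^ m) / (1 - θ) := by
    rw [← neg_div_neg_eq]; ring_nf
  rw [h1, div_le_div_iff₀ (by linarith) (by linarith)]
  have := pow_nonneg hθ0 m
  nlinarith

lemma energy_bound (hM : Bornology.IsBounded (Set.univ : Set M))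
    {α β : ℝ} (hβ : 0 < β) (hβα : β < α) {ε₀ : ℝ} (hε₀ : 0 < ε₀)
    (hpack : ∀ ε : ℝ, 0 < ε → ε < ε₀ →
      packingNumber M ε ≠ ⊤ ∧ (packingNumber M ε).toReal ≤ ε ^ (-β)) :
    ∃ C : ℝ, 0 ≤ C ∧ ∀ (n : ℕ) (v : Fin n → M) (T : SimpleGraph (Fin n)),
      IsMST v T → energy v T α ≤ C := by
  classical
  have hα : 0 < α := lt_trans hβ hβα
  obtain ⟨D₀, hD₀⟩ := Metric.isBounded_iff.mp hM
  set D : ℝ := max D₀ 1 with hD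
  have hD1 : (1:ℝ) ≤ D := le_max_right _ _
  have hD0 : (0:ℝ) < D := lt_of_lt_of_le one_pos hD1
  have hDdist : ∀ x y : M, dist x y ≤ D :=
    fun x y => le_trans (hD₀ (Set.mem_univ x) (Set.mem_univ y)) (le_max_left _ _)
  -- the fixed-scale packing constant
  set ε₁ : ℝ := ε₀ / 2 with hε₁
  have hε₁pos : 0 < ε₁ := by positivity
  have hε₁lt : ε₁ < ε₀ := by rw [hε₁]; linarith
  have hfin₁ : packingNumber M ε₁ ≠ ⊤ := (hpack ε₁ hε₁pos hε₁lt).1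
  set K : ℝ := (packingNumber M ε₁).toReal with hKdef
  have hK0 : 0 ≤ K := ENNReal.toReal_nonneg
  -- uniform packing bound
  have hNb : ∀ ε : ℝ, 0 < ε → packingNumber M ε ≠ ⊤ ∧
      (packingNumber M ε).toReal ≤ K + ε ^ (-β) := by
    intro ε hεpos
    by_cases hcase : ε < ε₁
    · obtain ⟨hf, hb⟩ := hpack ε hεpos (lt_trans hcase hε₁lt)
      exact ⟨hf, le_trans hb (by nlinarith)⟩
    · push_neg at hcase
      have hle := packing_antitone (M := M) hcase
      refine ⟨fun h => hfin₁ (by rw [← top_le_iff, ← h]; exact hle), ?_⟩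
      have h2 := ENNReal.toReal_mono hfin₁ hle
      have : (0:ℝ) < ε ^ (-β) := Real.rpow_pos_of_pos hεpos _
      rw [← hKdef] at h2
      linarith
  set w : ℝ := 1/2 with hw
  have hw0 : (0:ℝ) < w := by norm_num
  have hw1 : w < 1 := by norm_num
  set θ : ℝ := w ^ (α - β) with hθ
  have hθ0 : 0 < θ := Real.rpow_pos_of_pos hw0 _
  have hθ1 : θ < 1 := Real.rpow_lt_one (le_of_lt hw0) hw1 (by linarith)
  set K₂ : ℝ := K * D ^ α + D ^ (α - β) * (w ^ (-β)) ^ 2 with hK₂def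
  have hK₂0 : 0 ≤ K₂ := by
    have h1 : (0:ℝ) ≤ D ^ α := le_of_lt (Real.rpow_pos_of_pos hD0 _)
    have h2 : (0:ℝ) < D ^ (α - β) := Real.rpow_pos_of_pos hD0 _
    have h3 : (0:ℝ) < (w ^ (-β)) ^ 2 := by positivity
    nlinarith
  refine ⟨K₂ * (1 / (1 - θ)), mul_nonneg hK₂0 (le_of_lt (div_pos one_pos (by linarith))), ?_⟩
  intro n v T hMST
  rw [energy_eq]
  set F := T.edgeSet.toFinite.toFinset with hF
  set P := F.filter (fun e => 0 < elen v e) with hP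
  have hsplit : ∑ e ∈ F, elen v e ^ α = ∑ e ∈ P, elen v e ^ α := by
    rw [← Finset.sum_filter_add_sum_filter_not F (fun e => 0 < elen v e), ← hP]
    have : ∑ e ∈ F.filter (fun e => ¬ 0 < elen v e), elen v e ^ α = 0 := by
      refine Finset.sum_eq_zero fun e he => ?_
      rw [Finset.mem_filter] at he
      have h0 : elen v e = 0 := le_antisymm (not_lt.mp he.2) (elen_nonneg v e)
      rw [h0, Real.zero_rpow (ne_of_gt hα)]
    rw [this, add_zero]
  rw [hsplit]
  by_cases hPne : P.Nonempty
  swap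
  · rw [Finset.not_nonempty_iff_eq_empty] at hPne
    rw [hPne, Finset.sum_empty]
    exact mul_nonneg hK₂0 (le_of_lt (div_pos one_pos (by linarith)))
  -- minimum positive edge length
  set δ : ℝ := (P.image (elen v)).min' (hPne.image _) with hδ
  have hδpos : 0 < δ := by
    have hmem := (P.image (elen v)).min'_mem (hPne.image _)
    rw [Finset.mem_image] at hmem
    obtain ⟨e, heP, hee⟩ := hmem
    rw [hP, Finset.mem_filter] at heP
    rw [hδ, ← hee]
    exact heP.2
  have hδle : ∀ e ∈ P, δ ≤ elen v e := by
    intro e heP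
    exact (P.image (elen v)).min'_le _ (Finset.mem_image_of_mem _ heP)
  obtain ⟨m, hm⟩ : ∃ m : ℕ, w ^ m < δ / D := exists_pow_lt_of_lt_one (by positivity) hw1
  have hmδ : D * w ^ m < δ := by
    rw [lt_div_iff₀ hD0] at hm
    linarith [hm]
  -- dyadic classes
  set A : ℕ → Finset (Sym2 (Fin n)) := fun k =>
    P.filter (fun e => D * w ^ (k+1) < elen v e ∧ elen v e ≤ D * w ^ k) with hA
  have hcover : P ⊆ (Finset.range m).biUnion A := by
    intro e heP
    have h1 : elen v e ≤ D * w ^ 0 := by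
      rw [pow_zero, mul_one]
      rw [hP, Finset.mem_filter, hF, Set.Finite.mem_toFinset] at heP
      obtain ⟨he, -⟩ := heP
      induction e with
      | _ i j => exact hDdist (v i) (v j)
    have h2 : D * w ^ m < elen v e := lt_of_lt_of_le hmδ (hδle e heP)
    have hex : ∃ k, ¬ elen v e ≤ D * w ^ k := ⟨m, not_le.mpr h2⟩
    have hfind := Nat.find_spec hex
    have hle : Nat.find hex ≤ m := Nat.find_le (not_le.mpr h2)
    have hpos : 0 < Nat.find hex := by
      rcases Nat.eq_zero_or_pos (Nat.find hex) with h0 | h0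
      · rw [h0] at hfind; exact absurd h1 hfind
      · exact h0
    set k := Nat.find hex - 1 with hk
    have hks : Nat.find hex = k + 1 := by omega
    have hkprev : elen v e ≤ D * w ^ k := by
      exact not_not.mp (Nat.find_min hex (by omega))
    refine Finset.mem_biUnion.mpr ⟨k, Finset.mem_range.mpr (by omega), ?_⟩
    rw [hA, Finset.mem_filter]
    refine ⟨heP, ?_, hkprev⟩
    rw [← hks]
    exact not_le.mp hfind
  have hdisjaux : ∀ k k' : ℕ, k < k' → ∀ e, e ∈ A k → e ∈ A k' → False := by
    intro k k' hkk' e hek hek'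
    rw [hA, Finset.mem_filter] at hek hek'
    have h1 : elen v e ≤ D * w ^ k' := hek'.2.2
    have h2 : D * w ^ (k+1) < elen v e := hek.2.1
    have h3 : w ^ k' ≤ w ^ (k+1) :=
      pow_le_pow_of_le_one (le_of_lt hw0) (le_of_lt hw1) (by omega)
    nlinarith
  have hdisj : Set.PairwiseDisjoint ↑(Finset.range m) A := by
    intro k _ k' _ hne
    rw [Function.onFun, Finset.disjoint_left]
    intro e hek hek'
    rcases lt_or_gt_of_ne hne with h | h
    · exact hdisjaux k k' h e hek hek'
    · exact hdisjaux k' k h e hek' hek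
  have hstep : ∀ k : ℕ, ∑ e ∈ A k, elen v e ^ α ≤ K₂ * θ ^ k := by
    intro k
    -- cardinality bound
    have hsub : A k ⊆ F.filter (fun e => D * w ^ (k+1) ≤ elen v e) := by
      intro e he
      rw [hA, Finset.mem_filter] at he
      rw [Finset.mem_filter]
      exact ⟨(Finset.mem_filter.mp he.1).1, le_of_lt he.2.1⟩
    have hr0 : (0:ℝ) < D * w ^ (k+1) := by positivity
    have hcnt := count_le_packing hMST hr0
    set εk : ℝ := D * w ^ (k+1) / 2 with hεk
    have hεkpos : 0 < εk := by positivity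
    obtain ⟨hfink, hbk⟩ := hNb εk hεkpos
    have hcard : ((A k).card : ℝ) ≤ K + εk ^ (-β) := by
      have h1 : ((A k).card : ℝ≥0∞) ≤ packingNumber M εk := by
        refine le_trans ?_ hcnt
        exact_mod_cast Nat.cast_le.mpr (Finset.card_le_card hsub)
      have h2 := ENNReal.toReal_mono hfink h1
      rw [ENNReal.toReal_natCast] at h2
      linarith
    -- term bound
    have hterm : ∀ e ∈ A k, elen v e ^ α ≤ (D * w ^ k) ^ α := by
      intro e he
      rw [hA, Finset.mem_filter] at he
      exact Real.rpow_le_rpow (elen_nonneg v e) he.2.2 (le_of_lt hα)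
    have hsum1 : ∑ e ∈ A k, elen v e ^ α ≤ ((A k).card : ℝ) * (D * w ^ k) ^ α := by
      have := Finset.sum_le_card_nsmul (A k) (fun e => elen v e ^ α) ((D * w ^ k) ^ α) hterm
      rwa [nsmul_eq_mul] at this
    have hpow0 : (0:ℝ) ≤ (D * w ^ k) ^ α := Real.rpow_nonneg (by positivity) _
    have hsum2 : ((A k).card : ℝ) * (D * w ^ k) ^ α ≤ (K + εk ^ (-β)) * (D * w ^ k) ^ α :=
      mul_le_mul_of_nonneg_right hcard hpow0
    -- algebra
    have hDw : (D * w ^ k) ^ α = D ^ α * (w ^ α) ^ k := by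
      rw [Real.mul_rpow (le_of_lt hD0) (by positivity), ← Real.rpow_natCast w k,
        ← Real.rpow_mul (le_of_lt hw0), mul_comm ((k : ℕ) : ℝ) α,
        Real.rpow_mul (le_of_lt hw0), Real.rpow_natCast]
    have hεkw : εk = D * w ^ (k+2) := by
      rw [hεk, hw]; ring
    have hεkβ : εk ^ (-β) = D ^ (-β) * (w ^ (-β)) ^ (k + 2) := by
      rw [hεkw, Real.mul_rpow (le_of_lt hD0) (by positivity), ← Real.rpow_natCast w (k+2),
        ← Real.rpow_mul (le_of_lt hw0), mul_comm (((k+2 : ℕ)) : ℝ) (-β),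
        Real.rpow_mul (le_of_lt hw0), Real.rpow_natCast]
    have hθsplit : ∀ j : ℕ, θ ^ j = (w ^ α) ^ j * (w ^ (-β)) ^ j := by
      intro j
      rw [hθ, ← mul_pow, ← Real.rpow_add hw0]
      ring_nf
    have hwa0 : (0:ℝ) < w ^ α := Real.rpow_pos_of_pos hw0 _
    have hwb0 : (0:ℝ) < w ^ (-β) := Real.rpow_pos_of_pos hw0 _
    have hwb1 : (1:ℝ) ≤ w ^ (-β) :=
      Real.one_le_rpow_of_pos_of_le_one_of_nonpos hw0 (le_of_lt hw1) (by linarith)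
    have hDsplit : D ^ (-β) * D ^ α = D ^ (α - β) := by
      rw [← Real.rpow_add hD0]; ring_nf
    have halg : (K + εk ^ (-β)) * (D * w ^ k) ^ α ≤ K₂ * θ ^ k := by
      rw [hDw, hεkβ, hθsplit k, hK₂def]
      have e1 : (K + D ^ (-β) * (w ^ (-β)) ^ (k + 2)) * (D ^ α * (w ^ α) ^ k)
          = K * D ^ α * (w ^ α) ^ k
            + (D ^ (-β) * D ^ α) * (w ^ (-β)) ^ 2 * ((w ^ α) ^ k * (w ^ (-β)) ^ k) := by
        ring
      rw [e1, hDsplit]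
      have h1 : (1:ℝ) ≤ (w ^ (-β)) ^ k := by
        calc (1:ℝ) = 1 ^ k := (one_pow k).symm
        _ ≤ (w ^ (-β)) ^ k := pow_le_pow_left₀ (by norm_num) hwb1 k
      have e2 : K * D ^ α * (w ^ α) ^ k
          ≤ K * D ^ α * ((w ^ α) ^ k * (w ^ (-β)) ^ k) := by
        have hx : (0:ℝ) ≤ K * D ^ α * (w ^ α) ^ k :=
          mul_nonneg (mul_nonneg hK0 (le_of_lt (Real.rpow_pos_of_pos hD0 α)))
            (pow_nonneg (le_of_lt hwa0) k)
        calc K * D ^ α * (w ^ α) ^ k ≤ K * D ^ α * (w ^ α) ^ k * (w ^ (-β)) ^ k :=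
              le_mul_of_one_le_right hx h1
        _ = K * D ^ α * ((w ^ α) ^ k * (w ^ (-β)) ^ k) := by ring
      have e3 : (K * D ^ α + D ^ (α - β) * (w ^ (-β)) ^ 2) * ((w ^ α) ^ k * (w ^ (-β)) ^ k)
          = K * D ^ α * ((w ^ α) ^ k * (w ^ (-β)) ^ k)
            + D ^ (α - β) * (w ^ (-β)) ^ 2 * ((w ^ α) ^ k * (w ^ (-β)) ^ k) := by ring
      rw [e3]
      linarith [e2]
    exact le_trans hsum1 (le_trans hsum2 halg)
  calc ∑ e ∈ P, elen v e ^ α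
      ≤ ∑ e ∈ (Finset.range m).biUnion A, elen v e ^ α := by
        refine Finset.sum_le_sum_of_subset_of_nonneg hcover fun e _ _ => ?_
        exact Real.rpow_nonneg (elen_nonneg v e) _
    _ = ∑ k ∈ Finset.range m, ∑ e ∈ A k, elen v e ^ α := Finset.sum_biUnion hdisj
    _ ≤ ∑ k ∈ Finset.range m, K₂ * θ ^ k := Finset.sum_le_sum fun k _ => hstep k
    _ = K₂ * ∑ k ∈ Finset.range m, θ ^ k := by rw [Finset.mul_sum]
    _ ≤ K₂ * (1 / (1 - θ)) :=
        mul_le_mul_of_nonneg_left (geom_bound (le_of_lt hθ0) hθ1 m) hK₂0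

end EnergyBound

section DirA
variable {M : Type*} [MetricSpace M]

lemma dirA (hM : Bornology.IsBounded (Set.univ : Set M)) : dimMST M ≤ dimBox M := by
  by_cases hB : dimBox M = ⊤
  · rw [hB]; exact le_top
  have hmem : ∀ a : ℝ, dimBox M < ENNReal.ofReal a → dimMST M ≤ ENNReal.ofReal a := by
    intro a ha
    have ha0 : 0 < a := by
      by_contra h
      push_neg at h
      rw [ENNReal.ofReal_eq_zero.mpr h] at ha
      exact (not_lt_of_ge zero_le) ha
    set b := (dimBox M).toReal with hb
    have hba : b < a := by
      rw [hb, ← ENNReal.lt_ofReal_iff_toReal_lt hB]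
      exact ha
    set β : ℝ := (max b 0 + a) / 2 with hβdef
    have hβpos : 0 < β := by
      have : (0:ℝ) ≤ max b 0 := le_max_right _ _
      rw [hβdef]; linarith
    have hβa : β < a := by
      have : max b 0 < a := max_lt hba ha0
      rw [hβdef]; linarith
    have hBβ : dimBox M < ENNReal.ofReal β := by
      rw [ENNReal.lt_ofReal_iff_toReal_lt hB]
      have : b ≤ max b 0 := le_max_left _ _
      have h2 : max b 0 < β := by
        have : max b 0 < a := max_lt hba ha0
        rw [hβdef]; linarith
      linarith
    have hev : ∀ᶠ ε in nhdsWithin (0:ℝ) (Set.Ioi 0),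
        (if packingNumber M ε = ⊤ then (⊤ : ℝ≥0∞)
          else ENNReal.ofReal (Real.log (packingNumber M ε).toReal / Real.log (1 / ε)))
          < ENNReal.ofReal β :=
      Filter.eventually_lt_of_limsup_lt hBβ
    rw [Filter.eventually_iff, mem_nhdsGT_iff_exists_Ioo_subset] at hev
    obtain ⟨u, hu, hsub⟩ := hev
    rw [Set.mem_Ioi] at hu
    set ε₀ : ℝ := min u 1 with hε₀def
    have hε₀pos : 0 < ε₀ := lt_min hu one_pos
    have hpack : ∀ ε : ℝ, 0 < ε → ε < ε₀ →
        packingNumber M ε ≠ ⊤ ∧ (packingNumber M ε).toReal ≤ ε ^ (-β) := by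
      intro ε hε1 hε2
      have hεu : ε ∈ Set.Ioo (0:ℝ) u := ⟨hε1, lt_of_lt_of_le hε2 (min_le_left _ _)⟩
      have hεlt1 : ε < 1 := lt_of_lt_of_le hε2 (min_le_right _ _)
      have hf := hsub hεu
      rw [Set.mem_setOf_eq] at hf
      by_cases htop : packingNumber M ε = ⊤
      · rw [if_pos htop] at hf
        exact absurd hf (not_lt_of_ge le_top)
      rw [if_neg htop] at hf
      refine ⟨htop, ?_⟩
      rw [ENNReal.ofReal_lt_ofReal_iff hβpos] at hf
      have hL : 0 < Real.log (1 / ε) := Real.log_pos (by rw [lt_div_iff₀ hε1]; linarith)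
      rw [div_lt_iff₀ hL] at hf
      set Nt := (packingNumber M ε).toReal with hNt
      have hNt0 : 0 ≤ Nt := ENNReal.toReal_nonneg
      have hrpos : (0:ℝ) < ε ^ (-β) := Real.rpow_pos_of_pos hε1 _
      rcases eq_or_lt_of_le hNt0 with h0 | h0
      · rw [← h0]; exact le_of_lt hrpos
      have hlog : Real.log Nt < Real.log (ε ^ (-β)) := by
        rw [Real.log_rpow hε1]
        have : Real.log (1/ε) = - Real.log ε := by
          rw [one_div, Real.log_inv]
        rw [this] at hf
        linarith
      exact le_of_lt ((Real.log_lt_log_iff h0 hrpos).mp hlog)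
    obtain ⟨C, hC0, hC⟩ := energy_bound hM hβpos hβa hε₀pos hpack
    exact sInf_le ⟨a, ha0, rfl, C, hC⟩
  refine ENNReal.le_of_forall_pos_le_add fun η hη hlt => ?_
  have h1 : dimBox M < ENNReal.ofReal ((dimBox M).toReal + (η:ℝ)) := by
    rw [ENNReal.lt_ofReal_iff_toReal_lt hB]
    have : (0:ℝ) < η := hη
    linarith
  calc dimMST M ≤ ENNReal.ofReal ((dimBox M).toReal + (η:ℝ)) := hmem _ h1
  _ = ENNReal.ofReal (dimBox M).toReal + ENNReal.ofReal (η:ℝ) :=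
      ENNReal.ofReal_add ENNReal.toReal_nonneg (by positivity)
  _ = dimBox M + η := by
      rw [ENNReal.ofReal_toReal hB, ENNReal.ofReal_coe_nnreal]

end DirA

section DirB
variable {M : Type*} [MetricSpace M]

lemma energy_nonneg {n : ℕ} (v : Fin n → M) (T : SimpleGraph (Fin n)) (α : ℝ) :
    0 ≤ energy v T α := by
  rw [energy_eq]
  exact Finset.sum_nonneg fun e _ => Real.rpow_nonneg (elen_nonneg v e) _

lemma energy_bot {n : ℕ} (v : Fin n → M) (α : ℝ) :
    energy v (⊥ : SimpleGraph (Fin n)) α = 0 := by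
  rw [energy_eq]
  have h : (⊥ : SimpleGraph (Fin n)).edgeSet.toFinite.toFinset = ∅ := by
    rw [Set.Finite.toFinset_eq_empty, edgeSet_bot]
  rw [h, Finset.sum_empty]

lemma exists_isTree (n : ℕ) (hn : 0 < n) : ∃ T : SimpleGraph (Fin n), T.IsTree := by
  classical
  haveI : Nonempty (Fin n) := ⟨⟨0, hn⟩⟩
  have hne : (Finset.univ.filter (fun G : SimpleGraph (Fin n) => G.Connected)).Nonempty :=
    ⟨⊤, Finset.mem_filter.mpr ⟨Finset.mem_univ _, connected_top⟩⟩
  obtain ⟨G, hGmem, hGmin⟩ := Finset.exists_min_image _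
    (fun G : SimpleGraph (Fin n) => (G.edgeSet.toFinite.toFinset).card) hne
  rw [Finset.mem_filter] at hGmem
  have hGconn := hGmem.2
  refine ⟨G, hGconn, ?_⟩
  intro u c hc
  obtain ⟨e, he⟩ : ∃ e, e ∈ c.edges := by
    cases c with
    | nil => exact absurd rfl hc.ne_nil
    | cons h q => exact ⟨_, List.mem_cons_self⟩
  revert he
  induction e with
  | _ a b =>
    intro he
    have hadj : G.Adj a b := c.adj_of_mem_edges he
    have hreach : (G \ fromEdgeSet {s(a,b)}).Reachable a b :=
      (adj_and_reachable_delete_edges_iff_exists_cycle.mpr ⟨u, c, hc, he⟩).2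
    set G' := G \ fromEdgeSet {s(a,b)} with hG'
    have hG'conn : G'.Connected :=
      Connected.mk fun x y => reach_of_detour hreach (hGconn x y).some
    have hlt : (G'.edgeSet.toFinite.toFinset).card < (G.edgeSet.toFinite.toFinset).card := by
      apply Finset.card_lt_card
      rw [Finset.ssubset_iff_of_subset]
      · refine ⟨s(a,b), ?_, ?_⟩
        · rw [Set.Finite.mem_toFinset]; exact hadj
        · rw [Set.Finite.mem_toFinset, hG', edgeSet_sdiff, edgeSet_fromEdgeSet]
          rintro ⟨-, hcon⟩
          exact hcon ⟨rfl, by simp [hadj.ne]⟩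
      · intro x hx
        rw [Set.Finite.mem_toFinset] at hx ⊢
        rw [hG', edgeSet_sdiff] at hx
        exact hx.1
    exact absurd (hGmin G' (Finset.mem_filter.mpr ⟨Finset.mem_univ _, hG'conn⟩))
      (not_le.mpr hlt)

lemma exists_MST {n : ℕ} (v : Fin n → M) (hn : 0 < n) : ∃ T, IsMST v T := by
  classical
  obtain ⟨T₀, hT₀⟩ := exists_isTree n hn
  have hne : (Finset.univ.filter (fun G : SimpleGraph (Fin n) => G.IsTree)).Nonempty :=
    ⟨T₀, Finset.mem_filter.mpr ⟨Finset.mem_univ _, hT₀⟩⟩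
  obtain ⟨T, hTmem, hTmin⟩ := Finset.exists_min_image _ (fun G => energy v G 1) hne
  rw [Finset.mem_filter] at hTmem
  exact ⟨T, hTmem.2, fun T' hT' => hTmin T' (Finset.mem_filter.mpr ⟨Finset.mem_univ _, hT'⟩)⟩

lemma C_nonneg [Nonempty M] {a C : ℝ}
    (hC : ∀ n (v : Fin n → M) T, IsMST v T → energy v T a ≤ C) : 0 ≤ C := by
  set v : Fin 1 → M := fun _ => Classical.arbitrary M with hv
  have hbot : (⊥ : SimpleGraph (Fin 1)).IsTree := by
    constructor
    · exact Connected.mk fun u w => by rw [Subsingleton.elim u w]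
    · exact isAcyclic_bot
  have hMST : IsMST v ⊥ := by
    refine ⟨hbot, fun T' hT' => ?_⟩
    rw [energy_bot]
    exact energy_nonneg v T' 1
  have h := hC 1 v ⊥ hMST
  rwa [energy_bot] at h

lemma pack_le [Nonempty M] {a C : ℝ} (ha0 : 0 < a)
    (hC : ∀ n (v : Fin n → M) T, IsMST v T → energy v T a ≤ C)
    {ε : ℝ} (hε : 0 < ε) :
    packingNumber M ε ≤ ENNReal.ofReal (1 + C * (2*ε) ^ (-a)) := by
  have hC0 : 0 ≤ C := C_nonneg hC
  refine iSup₂_le fun S hS => ?_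
  rcases Nat.eq_zero_or_pos S.card with h0 | h0
  · rw [h0]; exact le_of_eq_of_le (by norm_num) zero_le
  set n := S.card with hn
  set v : Fin n → M := fun i => ((S.equivFin.symm i : S) : M) with hv
  obtain ⟨T, hT⟩ := exists_MST v h0
  have hbound := hC n v T hT
  have hcardE : (T.edgeSet.toFinite.toFinset).card + 1 = n := by
    have h1 := hT.1.card_edgeFinset
    have heq : T.edgeFinset = T.edgeSet.toFinite.toFinset := by
      ext e; rw [mem_edgeFinset, Set.Finite.mem_toFinset]
    rw [heq] at h1
    rwa [Fintype.card_fin] at h1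
  have hterm : ∀ e ∈ T.edgeSet.toFinite.toFinset, (2*ε)^a ≤ elen v e ^ a := by
    intro e he
    rw [Set.Finite.mem_toFinset] at he
    revert he
    induction e with
    | _ i j =>
      intro he
      have hij : i ≠ j := (T.ne_of_adj he)
      have hvij : v i ≠ v j := by
        intro hcon
        apply hij
        have := Subtype.coe_injective hcon
        exact S.equivFin.symm.injective this
      have hmem1 : (v i) ∈ S := by rw [hv]; exact Subtype.coe_prop _
      have hmem2 : (v j) ∈ S := by rw [hv]; exact Subtype.coe_prop _
      have hd := hS _ hmem1 _ hmem2 hvij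
      rw [elen_mk]
      exact Real.rpow_le_rpow (by linarith) hd (le_of_lt ha0)
  have hsum : ((n : ℝ) - 1) * (2*ε)^a ≤ energy v T a := by
    rw [energy_eq]
    have h2 := Finset.card_nsmul_le_sum (T.edgeSet.toFinite.toFinset)
      (fun e => elen v e ^ a) ((2*ε)^a) hterm
    rw [nsmul_eq_mul] at h2
    have hc : ((T.edgeSet.toFinite.toFinset).card : ℝ) = (n : ℝ) - 1 := by
      have h3 : ((T.edgeSet.toFinite.toFinset).card + 1 : ℝ) = (n : ℝ) := by
        exact_mod_cast congrArg (Nat.cast : ℕ → ℝ) hcardE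
      linarith
    rwa [hc] at h2
  have hp : (0:ℝ) < (2*ε)^a := Real.rpow_pos_of_pos (by linarith) _
  have hfin : (n:ℝ) ≤ 1 + C * (2*ε)^(-a) := by
    have h2 : ((n:ℝ) - 1) ≤ C / (2*ε)^a := by
      rw [le_div_iff₀ hp]
      linarith
    have h3 : C / (2*ε)^a = C * (2*ε)^(-a) := by
      rw [Real.rpow_neg (by linarith), div_eq_mul_inv]
    linarith [h3 ▸ h2]
  calc (S.card : ℝ≥0∞) = ENNReal.ofReal ((n:ℕ) : ℝ) := by
        rw [ENNReal.ofReal_natCast]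
  _ ≤ ENNReal.ofReal (1 + C * (2*ε) ^ (-a)) := ENNReal.ofReal_le_ofReal hfin

lemma dirB : dimBox M ≤ dimMST M := by
  refine le_sInf fun x hx => ?_
  obtain ⟨a, ha0, rfl, C, hC⟩ := hx
  by_cases hMemp : Nonempty M
  swap
  · have hpack0 : ∀ ε : ℝ, packingNumber M ε = 0 := by
      intro ε
      refine le_antisymm (iSup₂_le fun S hS => ?_) zero_le
      have hSe : S = ∅ := Finset.eq_empty_of_forall_notMem fun x hx => hMemp ⟨x⟩
      rw [hSe]
      simp
    have hfun : (fun ε : ℝ =>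
        if packingNumber M ε = ⊤ then (⊤ : ℝ≥0∞)
        else ENNReal.ofReal (Real.log (packingNumber M ε).toReal / Real.log (1 / ε)))
        = fun _ => (0 : ℝ≥0∞) := by
      funext ε
      rw [hpack0]
      simp
    rw [dimBox, hfun, Filter.limsup_const]
    exact zero_le
  haveI := hMemp
  have hC0 : 0 ≤ C := C_nonneg hC
  refine ENNReal.le_of_forall_pos_le_add fun η hη hlt => ?_
  have hηr : (0:ℝ) < (η:ℝ) := hη
  have key : dimBox M ≤ ENNReal.ofReal (a + (η:ℝ)) := by
    set K₁ : ℝ := 1 + C * 2^(-a) with hK₁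
    have h2a : (0:ℝ) < (2:ℝ)^(-a) := Real.rpow_pos_of_pos two_pos _
    have hK₁1 : 1 ≤ K₁ := by nlinarith
    have hK₁0 : 0 < K₁ := by linarith
    set ε₂ : ℝ := min 1 (Real.exp (-(Real.log K₁ / (η:ℝ)))) with hε₂
    have hε₂pos : 0 < ε₂ := lt_min one_pos (Real.exp_pos _)
    refine Filter.limsup_le_of_le (by isBoundedDefault) ?_
    refine Filter.eventually_of_mem (Ioo_mem_nhdsGT_of_mem ⟨le_refl (0:ℝ), hε₂pos⟩) ?_
    intro ε hεmem
    obtain ⟨hε0, hεlt⟩ := hεmem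
    have hεle1 : ε < 1 := lt_of_lt_of_le hεlt (min_le_left _ _)
    have hNle := pack_le ha0 hC hε0
    have hnt : packingNumber M ε ≠ ⊤ := ne_top_of_le_ne_top ENNReal.ofReal_ne_top hNle
    rw [if_neg hnt]
    apply ENNReal.ofReal_le_ofReal
    set Nt := (packingNumber M ε).toReal with hNtdef
    have hL : 0 < Real.log (1/ε) := Real.log_pos (by rw [lt_div_iff₀ hε0]; linarith)
    have hεa1 : 1 ≤ ε ^ (-a) :=
      Real.one_le_rpow_of_pos_of_le_one_of_nonpos hε0 (le_of_lt hεle1) (by linarith)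
    have hεa0 : 0 < ε ^ (-a) := Real.rpow_pos_of_pos hε0 _
    have hNtb : Nt ≤ K₁ * ε^(-a) := by
      have h1 : Nt ≤ 1 + C * (2*ε)^(-a) := by
        have := ENNReal.toReal_mono ENNReal.ofReal_ne_top hNle
        rwa [ENNReal.toReal_ofReal (by positivity)] at this
      have h2 : (2*ε : ℝ)^(-a) = 2^(-a) * ε^(-a) :=
        Real.mul_rpow (by norm_num) (le_of_lt hε0)
      rw [h2] at h1
      have h3 : (1:ℝ) + C * (2^(-a) * ε^(-a)) ≤ K₁ * ε^(-a) := by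
        rw [hK₁]
        have : (0:ℝ) ≤ C * 2^(-a) := by positivity
        nlinarith
      linarith
    have hlogK : 0 ≤ Real.log K₁ := Real.log_nonneg hK₁1
    have hLK : Real.log K₁ < (η:ℝ) * Real.log (1/ε) := by
      have hεe : ε < Real.exp (-(Real.log K₁ / (η:ℝ))) :=
        lt_of_lt_of_le hεlt (min_le_right _ _)
      have h1 : Real.exp (Real.log K₁ / (η:ℝ)) < 1/ε := by
        rw [Real.exp_neg] at hεe
        rw [one_div]
        exact (lt_inv_comm₀ (Real.exp_pos _) hε0).mpr hεe
      have h2 : Real.log K₁ / (η:ℝ) < Real.log (1/ε) := by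
        have := Real.log_lt_log (Real.exp_pos _) h1
        rwa [Real.log_exp] at this
      rw [div_lt_iff₀ hηr] at h2
      linarith [h2]
    have hlogNt : Real.log Nt ≤ Real.log K₁ + a * Real.log (1/ε) := by
      have hKε : 0 < K₁ * ε^(-a) := by positivity
      have hNt00 : (0:ℝ) ≤ Nt := ENNReal.toReal_nonneg
      rcases eq_or_lt_of_le hNt00 with h0 | h0
      · rw [← h0, Real.log_zero]
        have : 0 < a * Real.log (1/ε) := by positivity
        linarith
      have h1 : Real.log Nt ≤ Real.log (K₁ * ε^(-a)) := Real.log_le_log h0 hNtb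
      rw [Real.log_mul (ne_of_gt hK₁0) (ne_of_gt hεa0), Real.log_rpow hε0] at h1
      have h2 : Real.log (1/ε) = - Real.log ε := by rw [one_div, Real.log_inv]
      rw [h2]
      linarith
    rw [div_le_iff₀ hL]
    have : (a + (η:ℝ)) * Real.log (1/ε) = a * Real.log (1/ε) + (η:ℝ) * Real.log (1/ε) := by
      ring
    rw [this]
    linarith
  calc dimBox M ≤ ENNReal.ofReal (a + (η:ℝ)) := key
  _ = ENNReal.ofReal a + ENNReal.ofReal (η:ℝ) :=
      ENNReal.ofReal_add (le_of_lt ha0) (le_of_lt hηr)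
  _ = ENNReal.ofReal a + η := by rw [ENNReal.ofReal_coe_nnreal]

end DirB

end MSTProof

/-- For a bounded metric space `M`, the MST dimension equals the upper box dimension. -/
theorem dimMST_eq_dimBox (M : Type*) [MetricSpace M]
    (hM : Bornology.IsBounded (Set.univ : Set M)) :
    dimMST M = dimBox M :=
  le_antisymm (MSTProof.dirA hM) MSTProof.dirB
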